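/- Let μ be a measure on ℝ with μ((c − δ, c]) < ∞ for some δ > 0, let c ∈ ℝ, L ≥ 0, and let Δ : (0, ∞) → [0, ∞) satisfy Δ(h) → 0 and Δ(h)/h → L as h → 0⁺. Then (1/h)·∫₀^{Δ(h)} μ((c − y, c]) dy → L·μ({c}) as h → 0⁺. -/

import Mathlib

open MeasureTheory Filter Set

/-- downward band estimate in the level-crossing analysis: if
`μ((c−δ, c]) < ∞` for some `δ > 0`, `Δ(h) → 0` and `Δ(h)/h → L ≥ 0` as
`h → 0⁺`, then `(1/h) ∫₀^{Δ(h)} μ((c−y, c]) dy → L·μ({c})` as `h → 0⁺`. -/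
theorem stmt_4 (μ : Measure ℝ) (c : ℝ) (hμ : ∃ δ > 0, μ (Ioc (c - δ) c) < ⊤)
    (L : ℝ) (hL : 0 ≤ L) (Δ : ℝ → ℝ) (hΔ : ∀ h > 0, 0 ≤ Δ h)
    (hΔ0 : Tendsto Δ (nhdsWithin 0 (Ioi 0)) (nhds 0))
    (hΔL : Tendsto (fun h => Δ h / h) (nhdsWithin 0 (Ioi 0)) (nhds L)) :
    Tendsto (fun h => (1 / h) * ∫ y in (0 : ℝ)..(Δ h), (μ (Ioc (c - y) c)).toReal)
      (nhdsWithin 0 (Ioi 0)) (nhds (L * (μ {c}).toReal)) := by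
  obtain ⟨δ, hδ, hfin⟩ := hμ
  set m := (μ {c}).toReal with hm
  set g : ℝ → ℝ := fun y => (μ (Ioc (c - y) c)).toReal with hg
  have hfinle : ∀ ⦃y⦄, y ≤ δ → μ (Ioc (c - y) c) ≠ ⊤ := by
    intro y hy
    exact ((measure_mono (Ioc_subset_Ioc_left (by linarith))).trans_lt hfin).ne
  have mono : ∀ ⦃y y'⦄, y ≤ y' → y' ≤ δ → g y ≤ g y' := by
    intro y y' hyy' hy'
    exact ENNReal.toReal_mono (hfinle hy')
      (measure_mono (Ioc_subset_Ioc_left (by linarith)))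
  have lower : ∀ ⦃y⦄, 0 < y → y ≤ δ → m ≤ g y := by
    intro y hy hyd
    refine ENNReal.toReal_mono (hfinle hyd) (measure_mono ?_)
    rw [singleton_subset_iff]
    exact ⟨by linarith, le_refl c⟩
  have key : ∀ ε > 0, ∃ y₀, 0 < y₀ ∧ y₀ ≤ δ ∧ g y₀ < m + ε := by
    intro ε hε
    set S : ℕ → Set ℝ := fun n => Ioc (c - δ / (n + 1)) c with hS
    have hanti : Antitone S := by
      intro a b hab
      apply Ioc_subset_Ioc_left
      have h1 : (a : ℝ) + 1 ≤ (b : ℝ) + 1 := by exact_mod_cast Nat.succ_le_succ hab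
      have h2 : δ / ((b : ℝ) + 1) ≤ δ / ((a : ℝ) + 1) := by
        apply div_le_div_of_nonneg_left hδ.le (by positivity) h1
      linarith
    have hInter : ⋂ n, S n = {c} := by
      ext x
      simp only [mem_iInter, mem_Ioc, mem_singleton_iff, hS]
      constructor
      · intro h
        have hx := (h 0).2
        by_contra hne
        have hlt : x < c := lt_of_le_of_ne hx hne
        obtain ⟨n, hn⟩ := exists_nat_gt (δ / (c - x))
        have h1 : c - δ / ((n : ℝ) + 1) < x := (h n).1
        have hcx : (0:ℝ) < c - x := by linarith
        have h2 : δ / ((n : ℝ) + 1) < c - x := by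
          rw [div_lt_iff₀ (by positivity)]
          have : δ < (n : ℝ) * (c - x) := by
            rw [div_lt_iff₀ hcx] at hn; linarith
          nlinarith
        linarith
      · rintro rfl
        intro n
        have : (0:ℝ) < δ / ((n : ℝ) + 1) := by positivity
        exact ⟨by linarith, le_refl _⟩
    have hfin0 : μ (S 0) ≠ ⊤ := by
      apply hfinle (y := δ / ((0:ℕ) + 1))
      rw [div_le_iff₀ (by norm_num)]
      norm_num
    have hμt : Tendsto (fun n => μ (S n)) atTop (nhds (μ {c})) := by
      rw [← hInter]
      exact tendsto_measure_iInter_atTop (fun n => measurableSet_Ioc.nullMeasurableSet)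
        hanti ⟨0, hfin0⟩
    have hμc : μ {c} ≠ ⊤ := by
      refine ne_top_of_le_ne_top (hfinle le_rfl) (measure_mono ?_)
      rw [singleton_subset_iff]; exact ⟨by linarith, le_refl c⟩
    have hμt' : Tendsto (fun n : ℕ => g (δ / (n + 1))) atTop (nhds m) :=
      (ENNReal.tendsto_toReal hμc).comp hμt
    obtain ⟨n, hn⟩ := (hμt'.eventually_lt_const (lt_add_of_pos_right m hε)).exists
    refine ⟨δ / ((n : ℝ) + 1), by positivity, ?_, hn⟩
    exact div_le_self hδ.le (by norm_num)
  -- integrability / bounds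
  have hint : ∀ t, 0 ≤ t → t ≤ δ → IntervalIntegrable g volume 0 t := by
    intro t ht htδ
    apply MonotoneOn.intervalIntegrable
    intro y hy y' hy' hyy'
    rw [uIcc_of_le ht] at hy'
    exact mono hyy' (hy'.2.trans htδ)
  have hlow : ∀ t, 0 ≤ t → t ≤ δ → m * t ≤ ∫ y in (0:ℝ)..t, g y := by
    intro t ht htδ
    rw [intervalIntegral.integral_of_le ht]
    have hmt : m * t = ∫ _ in Ioc (0:ℝ) t, m := by
      rw [setIntegral_const]
      simp [Real.volume_Ioc, ENNReal.toReal_ofReal ht, mul_comm, ht]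
    rw [hmt]
    apply setIntegral_mono_on
    · exact (integrableOn_const_iff).mpr (Or.inr measure_Ioc_lt_top)
    · exact (hint t ht htδ).1
    · exact measurableSet_Ioc
    · intro y hy
      exact lower hy.1 (hy.2.trans htδ)
  have hup : ∀ t b, 0 ≤ t → t ≤ b → b ≤ δ → (∫ y in (0:ℝ)..t, g y) ≤ g b * t := by
    intro t b ht htb hbδ
    rw [intervalIntegral.integral_of_le ht]
    have hmt : g b * t = ∫ _ in Ioc (0:ℝ) t, g b := by
      rw [setIntegral_const]
      simp [Real.volume_Ioc, ENNReal.toReal_ofReal ht, mul_comm, ht]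
    rw [hmt]
    apply setIntegral_mono_on
    · exact (hint t ht (htb.trans hbδ)).1
    · exact (integrableOn_const_iff).mpr (Or.inr measure_Ioc_lt_top)
    · exact measurableSet_Ioc
    · intro y hy
      exact mono (hy.2.trans htb) hbδ
  set G : ℝ → ℝ := fun h => (1 / h) * (∫ y in (0:ℝ)..(Δ h), g y) - m * (Δ h / h) with hGdef
  have hG : Tendsto G (nhdsWithin 0 (Ioi 0)) (nhds 0) := by
    rw [Metric.tendsto_nhds]
    intro ε hε
    obtain ⟨ε', hε'def⟩ : ∃ x : ℝ, x = ε / (2 * (L + 1)) := ⟨_, rfl⟩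
    have hε'pos : 0 < ε' := by rw [hε'def]; positivity
    obtain ⟨y₀, hy₀pos, hy₀δ, hy₀⟩ := key ε' hε'pos
    have ev1 : ∀ᶠ h in nhdsWithin 0 (Ioi 0), Δ h < y₀ := hΔ0.eventually_lt_const hy₀pos
    have ev2 : ∀ᶠ h in nhdsWithin 0 (Ioi 0), Δ h / h < L + 1 :=
      hΔL.eventually_lt_const (lt_add_one L)
    have ev3 : ∀ᶠ h in nhdsWithin 0 (Ioi 0), h ∈ Ioi (0:ℝ) := self_mem_nhdsWithin
    filter_upwards [ev1, ev2, ev3] with h h1 h2 h3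
    have hh : 0 < h := h3
    have hΔh : 0 ≤ Δ h := hΔ h hh
    have hΔδ : Δ h ≤ δ := by linarith
    have hb1 : m * Δ h ≤ ∫ y in (0:ℝ)..(Δ h), g y := hlow _ hΔh hΔδ
    have hb2 : (∫ y in (0:ℝ)..(Δ h), g y) ≤ g y₀ * Δ h := hup _ _ hΔh h1.le hy₀δ
    have hinv : 0 < 1 / h := by positivity
    have hG0 : 0 ≤ G h := by
      have : m * (Δ h / h) ≤ (1 / h) * ∫ y in (0:ℝ)..(Δ h), g y := by
        have := mul_le_mul_of_nonneg_left hb1 hinv.le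
        calc m * (Δ h / h) = (1/h) * (m * Δ h) := by ring
        _ ≤ _ := this
      simp only [hGdef]; linarith
    have hGub : G h ≤ ε' * (Δ h / h) := by
      have h4 : (1 / h) * (∫ y in (0:ℝ)..(Δ h), g y) ≤ (1/h) * (g y₀ * Δ h) :=
        mul_le_mul_of_nonneg_left hb2 hinv.le
      have h5 : g y₀ - m < ε' := by linarith
      have h6 : 0 ≤ Δ h / h := div_nonneg hΔh hh.le
      calc G h ≤ (1/h) * (g y₀ * Δ h) - m * (Δ h / h) := by
            simp only [hGdef]; linarith
        _ = (g y₀ - m) * (Δ h / h) := by ring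
        _ ≤ ε' * (Δ h / h) := mul_le_mul_of_nonneg_right h5.le h6
    have h6 : 0 ≤ Δ h / h := div_nonneg hΔh hh.le
    have h7 : ε' * (Δ h / h) ≤ ε' * (L + 1) :=
      mul_le_mul_of_nonneg_left h2.le hε'pos.le
    have h8 : ε' * (L + 1) = ε / 2 := by
      rw [hε'def]; field_simp
    rw [Real.dist_eq, sub_zero, abs_of_nonneg hG0]
    calc G h ≤ ε' * (Δ h / h) := hGub
      _ ≤ ε' * (L + 1) := h7
      _ = ε / 2 := h8
      _ < ε := by linarith
  have hsum : Tendsto (fun h => G h + m * (Δ h / h)) (nhdsWithin 0 (Ioi 0))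
      (nhds (0 + m * L)) := hG.add (hΔL.const_mul m)
  have heq : (fun h => (1 / h) * ∫ y in (0 : ℝ)..(Δ h), (μ (Ioc (c - y) c)).toReal)
      = fun h => G h + m * (Δ h / h) := by
    funext h; simp only [hGdef, hg]; ring
  rw [heq, show L * m = 0 + m * L by ring]
  exact hsum
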